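/- Let r be a strict linear order on ℚ (an irreflexive, transitive, trichotomous binary relation) that is invariant under every order-automorphism of (ℚ,<), i.e., for every bijection g : ℚ → ℚ that is strictly increasing for the usual order, r(x,y) implies r(g(x), g(y)) for all x, y ∈ ℚ. Then r is equal to the usual strict order < on ℚ or to its reverse >. -/

import Mathlib

/-- The affine map `t ↦ x + t*(y-x)` for `x < y` is a strictly increasing bijection of `ℚ`. -/
lemma affine_aux (x y : ℚ) (h : x < y) :
    ∃ g : ℚ → ℚ, Function.Bijective g ∧ StrictMono g ∧ g 0 = x ∧ g 1 = y := by
  have hd : (0:ℚ) < y - x := by linarith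
  have hm : StrictMono (fun t : ℚ => x + t * (y - x)) := by
    intro a b hab
    simp only []
    nlinarith
  refine ⟨fun t => x + t * (y - x), ⟨hm.injective, fun c => ⟨(c - x) / (y - x), ?_⟩⟩, hm, by ring, by ring⟩
  field_simp
  ring

/-- A strict linear order on `ℚ` invariant under every order-automorphism of `(ℚ, <)`
is the usual strict order `<` or its reverse `>`. -/
theorem autQ_invariant_linear_order_rat (r : ℚ → ℚ → Prop)
    (hirr : ∀ x : ℚ, ¬ r x x)
    (htrans : ∀ x y z : ℚ, r x y → r y z → r x z)
    (htri : ∀ x y : ℚ, r x y ∨ x = y ∨ r y x)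
    (hinv : ∀ g : ℚ → ℚ, Function.Bijective g → StrictMono g →
      ∀ x y : ℚ, r x y → r (g x) (g y)) :
    (∀ x y : ℚ, r x y ↔ x < y) ∨ (∀ x y : ℚ, r x y ↔ y < x) := by
  rcases htri 0 1 with h01 | h | h10
  · -- r 0 1 : r is <
    left
    have fwd : ∀ x y : ℚ, x < y → r x y := by
      intro x y hxy
      obtain ⟨g, hb, hm, h0, h1⟩ := affine_aux x y hxy
      have := hinv g hb hm 0 1 h01
      rwa [h0, h1] at this
    intro x y
    constructor
    · intro hr
      rcases lt_trichotomy x y with h | h | h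
      · exact h
      · exact absurd (h ▸ hr) (hirr y)
      · exact absurd (htrans x y x hr (fwd y x h)) (hirr x)
    · exact fwd x y
  · exact absurd h (by norm_num)
  · -- r 1 0 : r is >
    right
    have fwd : ∀ x y : ℚ, y < x → r x y := by
      intro x y hxy
      obtain ⟨g, hb, hm, h0, h1⟩ := affine_aux y x hxy
      have := hinv g hb hm 1 0 h10
      rwa [h0, h1] at this
    intro x y
    constructor
    · intro hr
      rcases lt_trichotomy y x with h | h | h
      · exact h
      · exact absurd (h ▸ hr) (hirr x)
      · exact absurd (htrans x y x hr (fwd y x h)) (hirr x)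
    · exact fwd x y
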